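/- Let P be the solution of the synaptic CME with initial condition P(N0,0,0)=1 and P(n,o,0)=0 for all other states, let t_k ≥ 0, ε > 0, and let N_max be any integer with ∑_{n'=N_max}^{N0} P_N(n', t_k) < ε. Then the same tail bound persists for all later times: ∑_{n'=N_max}^{N0} P_N(n', t) < ε for all t ≥ t_k. -/

import Mathlib

open Finset

/-- Right-hand side of the synaptic chemical master equation (CME) for state `(n,o)`
at time `t`.  Terms referring to out-of-range indices are set to zero. -/
noncomputable def cmeRHS (N0 C : ℕ) (κd κe : ℝ) (κa : ℝ → ℝ)
    (P : ℕ → ℕ → ℝ → ℝ) (n o : ℕ) (t : ℝ) : ℝ :=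
  -(κd * (o : ℝ) + κe * ((n : ℝ) - (o : ℝ)) + κa t * ((n : ℝ) - (o : ℝ)) * ((C : ℝ) - (o : ℝ)))
      * P n o t
  + (if o + 1 ≤ C then κd * ((o : ℝ) + 1) * P n (o + 1) t else 0)
  + (if n + 1 ≤ N0 then κe * ((n : ℝ) + 1 - (o : ℝ)) * P (n + 1) o t else 0)
  + (if 1 ≤ o then κa t * ((n : ℝ) - (o : ℝ) + 1) * ((C : ℝ) - (o : ℝ) + 1) * P n (o - 1) t
     else 0)

/-- `P` solves the synaptic CME on `[0,∞)`. -/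
def IsCMESolution (N0 C : ℕ) (κd κe : ℝ) (κa : ℝ → ℝ) (P : ℕ → ℕ → ℝ → ℝ) : Prop :=
  ∀ n, n ≤ N0 → ∀ o, o ≤ C → ∀ t : ℝ, 0 ≤ t →
    HasDerivAt (fun s => P n o s) (cmeRHS N0 C κd κe κa P n o t) t

/-- Marginal distribution of the total number of neurotransmitters:
`P_N(n,t) = ∑_{o=0}^{C} P(n,o,t)`. -/
noncomputable def margN (C : ℕ) (P : ℕ → ℕ → ℝ → ℝ) (n : ℕ) (t : ℝ) : ℝ :=
  ∑ o ∈ Finset.range (C + 1), P n o t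

/-- Marginal distribution of the number of occupied receptors:
`P_O(o,t) = ∑_{n=0}^{N0} P(n,o,t)`. -/
noncomputable def margO (N0 : ℕ) (P : ℕ → ℕ → ℝ → ℝ) (o : ℕ) (t : ℝ) : ℝ :=
  ∑ n ∈ Finset.range (N0 + 1), P n o t

/-- Binomial probability mass function `P_B(k; m, p)`. -/
noncomputable def binPMF (m : ℕ) (p : ℝ) (k : ℕ) : ℝ :=
  (m.choose k : ℝ) * p ^ k * (1 - p) ^ (m - k)

/-- Right-hand side of the CME truncated to the state set `S`: the entry for a state
`(n,o) ∈ S` keeps the full diagonal term but only receives inflow from states in `S`. -/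
noncomputable def truncRHS (N0 C : ℕ) (κd κe : ℝ) (κa : ℝ → ℝ)
    (S : Finset (ℕ × ℕ)) (Q : ℕ → ℕ → ℝ → ℝ) (n o : ℕ) (t : ℝ) : ℝ :=
  -(κd * (o : ℝ) + κe * ((n : ℝ) - (o : ℝ)) + κa t * ((n : ℝ) - (o : ℝ)) * ((C : ℝ) - (o : ℝ)))
      * Q n o t
  + (if o + 1 ≤ C ∧ (n, o + 1) ∈ S then κd * ((o : ℝ) + 1) * Q n (o + 1) t else 0)
  + (if n + 1 ≤ N0 ∧ (n + 1, o) ∈ S then κe * ((n : ℝ) + 1 - (o : ℝ)) * Q (n + 1) o t else 0)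
  + (if 1 ≤ o ∧ (n, o - 1) ∈ S then
      κa t * ((n : ℝ) - (o : ℝ) + 1) * ((C : ℝ) - (o : ℝ) + 1) * Q n (o - 1) t
     else 0)

/-- `Q` is the truncated solution on the state set `S` for `t ≥ tk`, with initial
condition `Q(tk) = P(tk)|_S`. -/
def IsTruncatedSolution (N0 C : ℕ) (κd κe : ℝ) (κa : ℝ → ℝ)
    (S : Finset (ℕ × ℕ)) (tk : ℝ) (P Q : ℕ → ℕ → ℝ → ℝ) : Prop :=
  (∀ p ∈ S, Q p.1 p.2 tk = P p.1 p.2 tk) ∧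
  (∀ p ∈ S, ∀ t : ℝ, tk ≤ t →
    HasDerivAt (fun s => Q p.1 p.2 s) (truncRHS N0 C κd κe κa S Q p.1 p.2 t) t)

set_option maxHeartbeats 2000000 in
lemma key_quad (c x y M S : ℝ) (hc : |c| ≤ M) (hx : x ^ 2 ≤ S) (hy : y ^ 2 ≤ S) :
    2 * x * (c * y) ≤ 2 * M * S := by
  have h0 : 0 ≤ M := le_trans (abs_nonneg c) hc
  have h1 := abs_le.mp hc
  nlinarith [mul_nonneg (sub_nonneg.mpr h1.2) (sq_nonneg (x - y)),
    mul_nonneg (sub_nonneg.mpr (neg_le.mp h1.1)) (sq_nonneg (x + y)), sq_nonneg x, sq_nonneg y]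


set_option maxHeartbeats 2000000 in
lemma cme_bound_bad (N0 C : ℕ) (κd κe : ℝ) (κa : ℝ → ℝ) (P : ℕ → ℕ → ℝ → ℝ)
    (hκd : 0 ≤ κd) (hκe : 0 ≤ κe) (hκa : ∀ t, 0 ≤ κa t)
    (bad : Finset (ℕ × ℕ))
    (hmem : ∀ p : ℕ × ℕ, p ∈ bad ↔ p.1 ≤ N0 ∧ p.2 ≤ C ∧ p.1 < p.2)
    (E B : ℝ → ℝ)
    (hE : ∀ s : ℝ, E s = ∑ p ∈ bad, (P p.1 p.2 s) ^ 2)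
    (hB : ∀ s : ℝ, B s = (κd + κe + κa s) * ((N0:ℝ) + (C:ℝ) + 2) ^ 2)
    (s : ℝ) (p : ℕ × ℕ) (hp : p ∈ bad) :
    2 * P p.1 p.2 s * cmeRHS N0 C κd κe κa P p.1 p.2 s ≤ 8 * B s * E s := by
  have hEnonneg : 0 ≤ E s := by rw [hE]; exact Finset.sum_nonneg fun q _ => sq_nonneg _
  have hsqle : ∀ q ∈ bad, (P q.1 q.2 s) ^ 2 ≤ E s := by
    intro q hq
    rw [hE]
    exact Finset.single_le_sum (f := fun q : ℕ × ℕ => (P q.1 q.2 s) ^ 2)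
      (fun r _ => sq_nonneg _) hq
  obtain ⟨n, o⟩ := p
  obtain ⟨hn, ho, hno⟩ := (hmem (n, o)).1 hp
  show 2 * P n o s * cmeRHS N0 C κd κe κa P n o s ≤ 8 * B s * E s
  simp only at hn ho hno
  have hnR : (n:ℝ) ≤ N0 := Nat.cast_le.mpr hn
  have hoR : (o:ℝ) ≤ C := Nat.cast_le.mpr ho
  have hnoR : (n:ℝ) < o := Nat.cast_lt.mpr hno
  have hn0 : (0:ℝ) ≤ n := Nat.cast_nonneg n
  have ho0 : (0:ℝ) ≤ o := Nat.cast_nonneg o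
  have hN00 : (0:ℝ) ≤ N0 := Nat.cast_nonneg N0
  have hC0 : (0:ℝ) ≤ C := Nat.cast_nonneg C
  have hκas := hκa s
  set Z : ℝ := (N0:ℝ) + (C:ℝ) + 2 with hZ
  have hZ1 : (1:ℝ) ≤ Z := by rw [hZ]; linarith
  have hbig : (C:ℝ) + 1 ≤ Z ^ 2 := by nlinarith
  have hBexp : B s = κd * Z ^ 2 + κe * Z ^ 2 + κa s * Z ^ 2 := by rw [hB]; ring
  have hd2 : 0 ≤ κd * Z ^ 2 := by positivity
  have he2 : 0 ≤ κe * Z ^ 2 := by positivity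
  have ha2 : 0 ≤ κa s * Z ^ 2 := by positivity
  have hBs : 0 ≤ B s := by rw [hBexp]; linarith
  have hxE : (P n o s) ^ 2 ≤ E s := hsqle (n, o) hp
  have hzero : (0:ℝ) ≤ 2 * B s * E s := by positivity
  rw [cmeRHS, mul_add, mul_add, mul_add]
  have hT0 : 2 * P n o s *
      (-(κd * (o : ℝ) + κe * ((n : ℝ) - o) + κa s * ((n : ℝ) - o) * ((C : ℝ) - o))
        * P n o s) ≤ 2 * B s * E s := by
    apply key_quad _ _ _ _ _ _ hxE hxE
    rw [abs_le, hBexp]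
    have b1 : κd * (o:ℝ) ≤ κd * Z ^ 2 :=
      mul_le_mul_of_nonneg_left (by linarith) hκd
    have b1' : 0 ≤ κd * (o:ℝ) := mul_nonneg hκd ho0
    have b2 : κe * ((n:ℝ) - o) ≤ 0 :=
      mul_nonpos_of_nonneg_of_nonpos hκe (by linarith)
    have b2' : -(κe * Z ^ 2) ≤ κe * ((n:ℝ) - o) := by
      calc -(κe * Z ^ 2) = κe * (-(Z ^ 2)) := by ring
        _ ≤ κe * ((n:ℝ) - o) := mul_le_mul_of_nonneg_left (by nlinarith) hκe
    have b3 : κa s * ((n:ℝ) - o) * ((C:ℝ) - o) ≤ 0 :=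
      mul_nonpos_of_nonpos_of_nonneg
        (mul_nonpos_of_nonneg_of_nonpos hκas (by linarith)) (by linarith)
    have hprod0 : -(Z ^ 2) ≤ ((n:ℝ) - o) * ((C:ℝ) - o) := by
      nlinarith [mul_le_mul (show (o:ℝ) - n ≤ C by linarith)
        (show (C:ℝ) - o ≤ C by linarith) (show (0:ℝ) ≤ (C:ℝ) - o by linarith) hC0]
    have b3' : -(κa s * Z ^ 2) ≤ κa s * ((n:ℝ) - o) * ((C:ℝ) - o) := by
      rw [mul_assoc]
      calc -(κa s * Z ^ 2) = κa s * (-(Z ^ 2)) := by ring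
        _ ≤ _ := mul_le_mul_of_nonneg_left hprod0 hκas
    constructor <;> linarith
  have hT1 : 2 * P n o s *
      (if o + 1 ≤ C then κd * ((o : ℝ) + 1) * P n (o + 1) s else 0) ≤ 2 * B s * E s := by
    split_ifs with h1
    · have hp1 : ((n, o + 1) : ℕ × ℕ) ∈ bad := (hmem _).2 ⟨hn, h1, by omega⟩
      have hyE : (P n (o + 1) s) ^ 2 ≤ E s := hsqle _ hp1
      apply key_quad _ _ _ _ _ _ hxE hyE
      rw [abs_of_nonneg (by positivity), hBexp]
      have : κd * ((o:ℝ) + 1) ≤ κd * Z ^ 2 :=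
        mul_le_mul_of_nonneg_left (by linarith) hκd
      linarith
    · rw [mul_zero]; exact hzero
  have hT2 : 2 * P n o s *
      (if n + 1 ≤ N0 then κe * ((n : ℝ) + 1 - o) * P (n + 1) o s else 0) ≤ 2 * B s * E s := by
    clear hT0 hT1
    split_ifs with h2
    · rcases Nat.lt_or_ge (n + 1) o with h3 | h3
      · have hp2 : ((n + 1, o) : ℕ × ℕ) ∈ bad := (hmem _).2 ⟨h2, ho, h3⟩
        have hyE : (P (n + 1) o s) ^ 2 ≤ E s := hsqle _ hp2
        apply key_quad _ _ _ _ _ _ hxE hyE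
        rw [abs_le, hBexp]
        have h3R : (n:ℝ) + 1 < (o:ℝ) := by exact_mod_cast h3
        have hu : κe * ((n:ℝ) + 1 - o) ≤ 0 :=
          mul_nonpos_of_nonneg_of_nonpos hκe (by linarith)
        have hl : -(κe * Z ^ 2) ≤ κe * ((n:ℝ) + 1 - o) := by
          calc -(κe * Z ^ 2) = κe * (-(Z ^ 2)) := by ring
            _ ≤ _ := mul_le_mul_of_nonneg_left (by nlinarith) hκe
        constructor <;> linarith
      · have ho' : o = n + 1 := by omega
        have hz : (n:ℝ) + 1 - o = 0 := by rw [ho']; push_cast; ring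
        rw [hz, mul_zero, zero_mul, mul_zero]
        exact hzero
    · rw [mul_zero]; exact hzero
  have hT3 : 2 * P n o s *
      (if 1 ≤ o then κa s * ((n : ℝ) - o + 1) * ((C : ℝ) - o + 1) * P n (o - 1) s else 0)
        ≤ 2 * B s * E s := by
    clear hT0 hT1 hT2
    split_ifs with h4
    · rcases Nat.lt_or_ge (n + 1) o with h3 | h3
      · have hp3 : ((n, o - 1) : ℕ × ℕ) ∈ bad := (hmem _).2 ⟨hn, by omega, by omega⟩
        have hyE : (P n (o - 1) s) ^ 2 ≤ E s := hsqle _ hp3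
        apply key_quad _ _ _ _ _ _ hxE hyE
        rw [abs_le, hBexp]
        have h3R : (n:ℝ) + 1 < (o:ℝ) := by exact_mod_cast h3
        have hA1 : (n:ℝ) - o + 1 ≤ 0 := by linarith
        have hB1 : (0:ℝ) ≤ (C:ℝ) - o + 1 := by linarith
        have hB2 : (C:ℝ) - o + 1 ≤ (C:ℝ) + 1 := by linarith
        have hprod : -(Z ^ 2) ≤ ((n:ℝ) - o + 1) * ((C:ℝ) - o + 1) := by
          nlinarith [mul_le_mul (show -((n:ℝ) - o + 1) ≤ C by linarith)
            hB2 hB1 hC0]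
        have hu : κa s * ((n:ℝ) - o + 1) * ((C:ℝ) - o + 1) ≤ 0 :=
          mul_nonpos_of_nonpos_of_nonneg
            (mul_nonpos_of_nonneg_of_nonpos hκas hA1) hB1
        have hl : -(κa s * Z ^ 2) ≤ κa s * ((n:ℝ) - o + 1) * ((C:ℝ) - o + 1) := by
          rw [mul_assoc]
          calc -(κa s * Z ^ 2) = κa s * (-(Z ^ 2)) := by ring
            _ ≤ _ := mul_le_mul_of_nonneg_left hprod hκas
        constructor <;> linarith
      · have ho' : o = n + 1 := by omega
        have hz : (n:ℝ) - o + 1 = 0 := by rw [ho']; push_cast; ring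
        rw [hz, mul_zero, zero_mul, zero_mul, mul_zero]
        exact hzero
    · rw [mul_zero]; exact hzero
  linarith [hT0, hT1, hT2, hT3]

set_option maxHeartbeats 2000000 in
lemma cme_bad_zero (N0 C : ℕ) (κd κe : ℝ) (κa : ℝ → ℝ)
    (hκd : 0 ≤ κd) (hκe : 0 ≤ κe) (hκa_cont : Continuous κa) (hκa : ∀ t, 0 ≤ κa t)
    (P : ℕ → ℕ → ℝ → ℝ) (hP : IsCMESolution N0 C κd κe κa P)
    (hinit0 : ∀ n o : ℕ, ¬(n = N0 ∧ o = 0) → P n o 0 = 0) :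
    ∀ t : ℝ, 0 ≤ t → ∀ n, n ≤ N0 → ∀ o, o ≤ C → n < o → P n o t = 0 := by
  classical
  intro t ht n hn o ho hno
  set bad : Finset (ℕ × ℕ) :=
    (Finset.range (N0+1) ×ˢ Finset.range (C+1)).filter (fun p => p.1 < p.2) with hbaddef
  have hmem : ∀ p : ℕ × ℕ, p ∈ bad ↔ p.1 ≤ N0 ∧ p.2 ≤ C ∧ p.1 < p.2 := by
    intro p
    simp only [hbaddef, Finset.mem_filter, Finset.mem_product, Finset.mem_range]
    omega
  set E : ℝ → ℝ := fun s => ∑ p ∈ bad, (P p.1 p.2 s) ^ 2 with hEdef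
  set B : ℝ → ℝ := fun s => (κd + κe + κa s) * ((N0:ℝ) + (C:ℝ) + 2) ^ 2 with hBdef
  have hEeq : ∀ s : ℝ, E s = ∑ p ∈ bad, (P p.1 p.2 s) ^ 2 := fun s => rfl
  have hBeq : ∀ s : ℝ, B s = (κd + κe + κa s) * ((N0:ℝ) + (C:ℝ) + 2) ^ 2 := fun s => rfl
  have hB0 : ∀ s, 0 ≤ B s := by
    intro s
    have h := hκa s
    have h2 : (0:ℝ) ≤ κd + κe + κa s := by linarith
    rw [hBeq]; positivity
  have hE0 : ∀ s, 0 ≤ E s := fun s => Finset.sum_nonneg fun q _ => sq_nonneg _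
  have hBcont : Continuous B := by
    rw [hBdef]; fun_prop
  have hEderiv : ∀ s : ℝ, 0 ≤ s → HasDerivAt E
      (∑ p ∈ bad, 2 * P p.1 p.2 s * cmeRHS N0 C κd κe κa P p.1 p.2 s) s := by
    intro s hs
    have h : HasDerivAt E
        (∑ p ∈ bad, ((2:ℕ) * (P p.1 p.2 s) ^ 1 * cmeRHS N0 C κd κe κa P p.1 p.2 s)) s := by
      apply HasDerivAt.fun_sum
      intro p hp
      rcases (hmem p).1 hp with ⟨h1, h2, _⟩
      exact (hP p.1 h1 p.2 h2 s hs).pow 2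
    convert h using 1
    apply Finset.sum_congr rfl; intros; push_cast; ring
  obtain ⟨x0, hx0mem, hx0'⟩ := isCompact_Icc.exists_isMaxOn (Set.nonempty_Icc.mpr ht)
    hBcont.continuousOn
  have hx0 : ∀ s ∈ Set.Icc (0:ℝ) t, B s ≤ B x0 := fun s hs => hx0' hs
  set c : ℝ := (bad.card : ℝ) * (8 * B x0) with hcdef
  have hc0 : 0 ≤ c := mul_nonneg (Nat.cast_nonneg _) (by have := hB0 x0; linarith)
  have hsum_le : ∀ s ∈ Set.Icc (0:ℝ) t,
      (∑ p ∈ bad, 2 * P p.1 p.2 s * cmeRHS N0 C κd κe κa P p.1 p.2 s) ≤ c * E s := by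
    intro s hs
    calc (∑ p ∈ bad, 2 * P p.1 p.2 s * cmeRHS N0 C κd κe κa P p.1 p.2 s)
        ≤ bad.card • (8 * B s * E s) := Finset.sum_le_card_nsmul _ _ _
          (fun p hp => cme_bound_bad N0 C κd κe κa P hκd hκe hκa bad hmem E B hEeq hBeq s p hp)
      _ = (bad.card : ℝ) * (8 * B s * E s) := by rw [nsmul_eq_mul]
      _ ≤ c * E s := by
          rw [hcdef]
          have h1 : B s ≤ B x0 := hx0 s hs
          have h2 := hE0 s
          have h3 : (0:ℝ) ≤ (bad.card : ℝ) := Nat.cast_nonneg _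
          nlinarith [mul_nonneg (mul_nonneg h3 (show (0:ℝ) ≤ B x0 - B s by linarith)) h2]
  set F : ℝ → ℝ := fun s => E s * Real.exp (-(c * s)) with hFdef
  have hFderiv : ∀ s : ℝ, 0 ≤ s → HasDerivAt F
      ((∑ p ∈ bad, 2 * P p.1 p.2 s * cmeRHS N0 C κd κe κa P p.1 p.2 s) * Real.exp (-(c * s))
        + E s * (Real.exp (-(c * s)) * -(c * 1))) s := by
    intro s hs
    exact (hEderiv s hs).mul (((hasDerivAt_id s).const_mul c).neg.exp)
  have hanti : AntitoneOn F (Set.Icc 0 t) := by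
    apply antitoneOn_of_deriv_nonpos (convex_Icc 0 t)
    · intro s hs; exact ((hFderiv s hs.1).continuousAt).continuousWithinAt
    · rw [interior_Icc]; intro s hs
      exact ((hFderiv s hs.1.le).differentiableAt).differentiableWithinAt
    · rw [interior_Icc]; intro s hs
      rw [(hFderiv s hs.1.le).deriv]
      have h1 := hsum_le s ⟨hs.1.le, hs.2.le⟩
      have h2 := Real.exp_pos (-(c * s))
      have h3 := hE0 s
      nlinarith
  have hE0eq : E 0 = 0 := by
    rw [hEeq]
    apply Finset.sum_eq_zero
    intro p hp
    obtain ⟨_, _, h3⟩ := (hmem p).1 hp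
    rw [hinit0 p.1 p.2 (by rintro ⟨h4, h5⟩; omega)]
    ring
  have hFt : F t ≤ F 0 := hanti (Set.left_mem_Icc.mpr ht) (Set.right_mem_Icc.mpr ht) ht
  have hF0 : F 0 = 0 := by rw [hFdef]; simp [hE0eq]
  have hEt : E t = 0 := by
    refine le_antisymm ?_ (hE0 t)
    have hexp := Real.exp_pos (-(c * t))
    have hFt' : E t * Real.exp (-(c * t)) ≤ 0 := by rw [← hF0]; exact hFt
    nlinarith
  have hple : (P n o t) ^ 2 ≤ E t := by
    rw [hEeq]
    exact Finset.single_le_sum (f := fun q : ℕ × ℕ => (P q.1 q.2 t) ^ 2)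
      (fun r _ => sq_nonneg _) ((hmem (n, o)).2 ⟨hn, ho, hno⟩)
  have hsq : (P n o t) ^ 2 = 0 := le_antisymm (hEt ▸ hple) (sq_nonneg _)
  exact pow_eq_zero_iff (by norm_num) |>.1 hsq

lemma infl_ge (c cmax w y : ℝ) (hc : 0 ≤ c) (hcm : c ≤ cmax) (hw : 0 < w) (hy : -w ≤ y) :
    -(cmax * w) ≤ c * y := by nlinarith


set_option maxHeartbeats 2000000 in
lemma cme_nonneg (N0 C : ℕ) (κd κe : ℝ) (κa : ℝ → ℝ)
    (hκd : 0 ≤ κd) (hκe : 0 ≤ κe) (hκa_cont : Continuous κa) (hκa : ∀ t, 0 ≤ κa t)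
    (P : ℕ → ℕ → ℝ → ℝ) (hP : IsCMESolution N0 C κd κe κa P)
    (hinit1 : P N0 0 0 = 1)
    (hinit0 : ∀ n o : ℕ, ¬(n = N0 ∧ o = 0) → P n o 0 = 0) :
    ∀ t : ℝ, 0 ≤ t → ∀ n, n ≤ N0 → ∀ o, o ≤ C → 0 ≤ P n o t := by
  classical
  have hbadzero := cme_bad_zero N0 C κd κe κa hκd hκe hκa_cont hκa P hP hinit0
  have hinit_nonneg : ∀ n o : ℕ, 0 ≤ P n o 0 := by
    intro n o
    by_cases h : n = N0 ∧ o = 0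
    · obtain ⟨h1, h2⟩ := h; subst h1; subst h2; rw [hinit1]; norm_num
    · rw [hinit0 n o h]
  intro t ht n hn o ho
  by_contra hneg
  push_neg at hneg
  obtain ⟨xa, hxamem, hxa'⟩ := isCompact_Icc.exists_isMaxOn (Set.nonempty_Icc.mpr ht)
    hκa_cont.continuousOn
  set A : ℝ := κa xa with hAdef
  have hA0 : 0 ≤ A := hκa xa
  have hAle : ∀ s ∈ Set.Icc (0:ℝ) t, κa s ≤ A := fun s hs => hxa' hs
  set Bc : ℝ := κd * ((C:ℝ) + 1) + κe * ((N0:ℝ) + (C:ℝ) + 1)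
      + A * (((N0:ℝ) + (C:ℝ) + 1) * ((C:ℝ) + 1)) with hBcdef
  have hN00 : (0:ℝ) ≤ N0 := Nat.cast_nonneg N0
  have hC0 : (0:ℝ) ≤ C := Nat.cast_nonneg C
  have hBc0 : 0 ≤ Bc := by
    rw [hBcdef]
    have h1 : 0 ≤ κd * ((C:ℝ) + 1) := by positivity
    have h2 : 0 ≤ κe * ((N0:ℝ) + (C:ℝ) + 1) := by positivity
    have h3 : 0 ≤ A * (((N0:ℝ) + (C:ℝ) + 1) * ((C:ℝ) + 1)) := by positivity
    linarith
  set K : ℝ := 4 * Bc + 1 with hKdef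
  have hK0 : 0 < K := by rw [hKdef]; linarith
  have hexp_t : 0 < Real.exp (K * t) := Real.exp_pos _
  set ε : ℝ := -(P n o t) / (2 * Real.exp (K * t)) with hεdef
  have hε : 0 < ε := by
    rw [hεdef]
    apply div_pos (by linarith) (by positivity)
  set Q : ℕ → ℕ → ℝ → ℝ := fun m p s => P m p s + ε * Real.exp (K * s) with hQdef
  set grid : Finset (ℕ × ℕ) := Finset.range (N0 + 1) ×ˢ Finset.range (C + 1) with hgriddef
  have hgridmem : ∀ p : ℕ × ℕ, p ∈ grid ↔ p.1 ≤ N0 ∧ p.2 ≤ C := by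
    intro p
    simp only [hgriddef, Finset.mem_product, Finset.mem_range]
    omega
  have hQ0 : ∀ p : ℕ × ℕ, 0 < Q p.1 p.2 0 := by
    intro p
    have h1 := hinit_nonneg p.1 p.2
    have h2 : (0:ℝ) < ε * Real.exp (K * 0) := by positivity
    simp only [hQdef]
    linarith
  have hQcont : ∀ p ∈ grid, ∀ s : ℝ, 0 ≤ s → ContinuousAt (fun u => Q p.1 p.2 u) s := by
    intro p hp s hs
    obtain ⟨h1, h2⟩ := (hgridmem p).1 hp
    exact ((hP p.1 h1 p.2 h2 s hs).continuousAt).add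
      ((continuous_const.mul (Real.continuous_exp.comp
        (continuous_const.mul continuous_id))).continuousAt)
  have hmain : ∀ s ∈ Set.Icc (0:ℝ) t, ∀ p ∈ grid, 0 < Q p.1 p.2 s := by
    by_contra hcon
    push_neg at hcon
    obtain ⟨s1, hs1, p1, hp1, hq1⟩ := hcon
    set S : Set ℝ := {s | s ∈ Set.Icc (0:ℝ) t ∧ ∃ p ∈ grid, Q p.1 p.2 s ≤ 0} with hSdef
    have hSne : S.Nonempty := ⟨s1, hs1, p1, hp1, hq1⟩
    have hSbdd : BddBelow S := ⟨0, fun x hx => hx.1.1⟩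
    set s0 : ℝ := sInf S with hs0def
    have hs0_le_t : s0 ≤ t := le_trans (csInf_le hSbdd ⟨hs1, p1, hp1, hq1⟩) hs1.2
    have hs0_ge : 0 ≤ s0 := le_csInf hSne (fun x hx => hx.1.1)
    have hs0Icc : s0 ∈ Set.Icc (0:ℝ) t := ⟨hs0_ge, hs0_le_t⟩
    have hSun : S = ⋃ p ∈ (grid : Set (ℕ × ℕ)), {s | s ∈ Set.Icc (0:ℝ) t ∧ Q p.1 p.2 s ≤ 0} := by
      ext x
      simp only [hSdef, Set.mem_setOf_eq, Set.mem_iUnion, exists_prop, Finset.mem_coe]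
      tauto
    have hclosure : s0 ∈ closure S := csInf_mem_closure hSne hSbdd
    rw [hSun, Set.Finite.closure_biUnion (grid.finite_toSet) _] at hclosure
    obtain ⟨p0, hp0, hs0cl⟩ := Set.mem_iUnion₂.1 hclosure
    have hQp0 : Q p0.1 p0.2 s0 ≤ 0 := by
      have hcw : ContinuousWithinAt (fun u => Q p0.1 p0.2 u)
          {s | s ∈ Set.Icc (0:ℝ) t ∧ Q p0.1 p0.2 s ≤ 0} s0 :=
        (hQcont p0 hp0 s0 hs0_ge).continuousWithinAt
      have himg := hcw.mem_closure_image hs0cl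
      have hsub : (fun u => Q p0.1 p0.2 u) ''
          {s | s ∈ Set.Icc (0:ℝ) t ∧ Q p0.1 p0.2 s ≤ 0} ⊆ Set.Iic 0 := by
        rintro y ⟨x, hx, rfl⟩; exact hx.2
      exact (closure_minimal hsub isClosed_Iic) himg
    have hpre : ∀ s, 0 ≤ s → s < s0 → ∀ p ∈ grid, 0 < Q p.1 p.2 s := by
      intro s hs hss0 p hp
      by_contra hq
      push_neg at hq
      have hsS : s ∈ S := ⟨⟨hs, le_trans hss0.le hs0_le_t⟩, p, hp, hq⟩
      exact absurd (csInf_le hSbdd hsS) (not_le.mpr hss0)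
    have hs0pos : 0 < s0 := by
      rcases eq_or_lt_of_le hs0_ge with h | h
      · exfalso; rw [← h] at hQp0; exact absurd (hQ0 p0) (not_lt.mpr hQp0)
      · exact h
    have hQs0 : ∀ p ∈ grid, 0 ≤ Q p.1 p.2 s0 := by
      intro p hp
      have htend : Filter.Tendsto (fun u => Q p.1 p.2 u)
          (nhdsWithin s0 (Set.Iio s0)) (nhds (Q p.1 p.2 s0)) :=
        ((hQcont p hp s0 hs0_ge).continuousWithinAt).tendsto
      refine ge_of_tendsto htend ?_
      have hIoo : Set.Ioo 0 s0 ∈ nhdsWithin s0 (Set.Iio s0) :=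
        Ioo_mem_nhdsLT_of_mem ⟨hs0pos, le_refl s0⟩
      filter_upwards [hIoo] with u hu
      exact (hpre u hu.1.le hu.2 p hp).le
    obtain ⟨n0, o0⟩ := p0
    obtain ⟨hn0, ho0⟩ := (hgridmem (n0, o0)).1 hp0
    simp only at hn0 ho0
    have hQ0s0 : Q n0 o0 s0 = 0 := le_antisymm hQp0 (hQs0 (n0, o0) hp0)
    set e0 : ℝ := Real.exp (K * s0) with he0def
    have he0pos : 0 < e0 := Real.exp_pos _
    have hw : 0 < ε * e0 := by positivity
    have hPs0 : P n0 o0 s0 = -(ε * e0) := by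
      have : P n0 o0 s0 + ε * e0 = 0 := hQ0s0
      linarith
    rcases Nat.lt_or_ge n0 o0 with hbad | hgood
    · -- bad state: P = 0 there, contradiction
      have hz := hbadzero s0 hs0_ge n0 hn0 o0 ho0 hbad
      rw [hz] at hPs0
      linarith
    -- good state : o0 ≤ n0
    have ho0n0 : (o0:ℝ) ≤ n0 := Nat.cast_le.mpr hgood
    have hn0R : (n0:ℝ) ≤ N0 := Nat.cast_le.mpr hn0
    have ho0R : (o0:ℝ) ≤ C := Nat.cast_le.mpr ho0
    have ho00 : (0:ℝ) ≤ o0 := Nat.cast_nonneg o0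
    have hPge : ∀ q ∈ grid, -(ε * e0) ≤ P q.1 q.2 s0 := by
      intro q hq
      have := hQs0 q hq
      simp only [hQdef] at this
      linarith
    have hder : HasDerivAt (fun u => Q n0 o0 u)
        (cmeRHS N0 C κd κe κa P n0 o0 s0 + ε * (Real.exp (K * s0) * (K * 1))) s0 := by
      have h1 := hP n0 hn0 o0 ho0 s0 hs0_ge
      have h2 : HasDerivAt (fun u => ε * Real.exp (K * u))
          (ε * (Real.exp (K * s0) * (K * 1))) s0 :=
        (((hasDerivAt_id s0).const_mul K).exp).const_mul ε
      exact h1.add h2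
    have hκas0 : κa s0 ≤ A := hAle s0 hs0Icc
    have hκas0' := hκa s0
    have hRHSge : -(Bc * (ε * e0)) ≤ cmeRHS N0 C κd κe κa P n0 o0 s0 := by
      rw [cmeRHS]
      have hT0 : 0 ≤ -(κd * (o0:ℝ) + κe * ((n0:ℝ) - o0)
          + κa s0 * ((n0:ℝ) - o0) * ((C:ℝ) - o0)) * P n0 o0 s0 := by
        have hD : 0 ≤ κd * (o0:ℝ) + κe * ((n0:ℝ) - o0)
            + κa s0 * ((n0:ℝ) - o0) * ((C:ℝ) - o0) := by
          have d1 : 0 ≤ κd * (o0:ℝ) := mul_nonneg hκd ho00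
          have d2 : 0 ≤ κe * ((n0:ℝ) - o0) := mul_nonneg hκe (by linarith)
          have d3 : 0 ≤ κa s0 * ((n0:ℝ) - o0) * ((C:ℝ) - o0) :=
            mul_nonneg (mul_nonneg hκas0' (by linarith)) (by linarith)
          linarith
        have heq : -(κd * (o0:ℝ) + κe * ((n0:ℝ) - o0)
            + κa s0 * ((n0:ℝ) - o0) * ((C:ℝ) - o0)) * P n0 o0 s0
            = (κd * (o0:ℝ) + κe * ((n0:ℝ) - o0)
            + κa s0 * ((n0:ℝ) - o0) * ((C:ℝ) - o0)) * (ε * e0) := by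
          rw [hPs0]; ring
        rw [heq]
        exact mul_nonneg hD hw.le
      have hT1 : -(κd * ((C:ℝ) + 1) * (ε * e0)) ≤
          (if o0 + 1 ≤ C then κd * ((o0:ℝ) + 1) * P n0 (o0 + 1) s0 else 0) := by
        split_ifs with h1
        · have h1R : (o0:ℝ) + 1 ≤ (C:ℝ) := by exact_mod_cast h1
          apply infl_ge _ _ _ _ (by positivity)
            (mul_le_mul_of_nonneg_left (by linarith) hκd) hw
          exact hPge (n0, o0 + 1) ((hgridmem _).2 ⟨hn0, h1⟩)
        · have : 0 ≤ κd * ((C:ℝ) + 1) * (ε * e0) := by positivity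
          linarith
      have hT2 : -(κe * ((N0:ℝ) + (C:ℝ) + 1) * (ε * e0)) ≤
          (if n0 + 1 ≤ N0 then κe * ((n0:ℝ) + 1 - o0) * P (n0 + 1) o0 s0 else 0) := by
        split_ifs with h2
        · apply infl_ge _ _ _ _ (mul_nonneg hκe (by linarith))
            (mul_le_mul_of_nonneg_left (by linarith) hκe) hw
          exact hPge (n0 + 1, o0) ((hgridmem _).2 ⟨h2, ho0⟩)
        · have : 0 ≤ κe * ((N0:ℝ) + (C:ℝ) + 1) * (ε * e0) := by positivity
          linarith
      have hT3 : -(A * (((N0:ℝ) + (C:ℝ) + 1) * ((C:ℝ) + 1)) * (ε * e0)) ≤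
          (if 1 ≤ o0 then κa s0 * ((n0:ℝ) - o0 + 1) * ((C:ℝ) - o0 + 1) * P n0 (o0 - 1) s0
            else 0) := by
        split_ifs with h3
        · apply infl_ge _ _ _ _
            (mul_nonneg (mul_nonneg hκas0' (by linarith)) (by linarith))
            ?_ hw (hPge (n0, o0 - 1) ((hgridmem _).2 ⟨hn0, by omega⟩))
          calc κa s0 * ((n0:ℝ) - o0 + 1) * ((C:ℝ) - o0 + 1)
              ≤ (A * ((N0:ℝ) + (C:ℝ) + 1)) * ((C:ℝ) + 1) := by
                apply mul_le_mul _ (by linarith) (by linarith)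
                  (mul_nonneg hA0 (by linarith))
                apply mul_le_mul hκas0 (by linarith) (by linarith) hA0
            _ = A * (((N0:ℝ) + (C:ℝ) + 1) * ((C:ℝ) + 1)) := by ring
        · have : 0 ≤ A * (((N0:ℝ) + (C:ℝ) + 1) * ((C:ℝ) + 1)) * (ε * e0) := by positivity
          linarith
      have hBcw : Bc * (ε * e0) = κd * ((C:ℝ) + 1) * (ε * e0)
          + κe * ((N0:ℝ) + (C:ℝ) + 1) * (ε * e0)
          + A * (((N0:ℝ) + (C:ℝ) + 1) * ((C:ℝ) + 1)) * (ε * e0) := by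
        rw [hBcdef]; ring
      linarith
    have hd0pos : 0 < cmeRHS N0 C κd κe κa P n0 o0 s0
        + ε * (Real.exp (K * s0) * (K * 1)) := by
      have h1 : ε * (Real.exp (K * s0) * (K * 1)) = K * (ε * e0) := by
        rw [he0def]; ring
      rw [h1, hKdef]
      have h2 : 0 ≤ Bc * (ε * e0) := mul_nonneg hBc0 hw.le
      nlinarith [hRHSge]
    rw [hasDerivAt_iff_tendsto_slope] at hder
    have hder' : Filter.Tendsto (slope (fun u => Q n0 o0 u) s0)
        (nhdsWithin s0 (Set.Iio s0))
        (nhds (cmeRHS N0 C κd κe κa P n0 o0 s0 + ε * (Real.exp (K * s0) * (K * 1)))) :=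
      hder.mono_left (nhdsWithin_mono s0 (fun x hx => ne_of_lt hx))
    have hev1 : ∀ᶠ u in nhdsWithin s0 (Set.Iio s0),
        0 < slope (fun u => Q n0 o0 u) s0 u :=
      hder'.eventually (eventually_gt_nhds hd0pos)
    have hev2 : ∀ᶠ u in nhdsWithin s0 (Set.Iio s0), u ∈ Set.Ioo (0:ℝ) s0 :=
      Filter.eventually_of_mem (Ioo_mem_nhdsLT_of_mem ⟨hs0pos, le_refl s0⟩) (fun x hx => hx)
    obtain ⟨u, hu1, hu2⟩ := (hev1.and hev2).exists
    have hden : u - s0 < 0 := by linarith [hu2.2]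
    rw [slope_def_field] at hu1
    have hQu_neg : Q n0 o0 u < 0 := by
      rcases div_pos_iff.1 hu1 with ⟨hnum, hden'⟩ | ⟨hnum, hden'⟩
      · linarith
      · rw [hQ0s0] at hnum; linarith
    have := hpre u hu2.1.le hu2.2 (n0, o0) hp0
    simp only at this
    linarith
  have hfinal := hmain t ⟨ht, le_refl t⟩ (n, o) ((hgridmem _).2 ⟨hn, ho⟩)
  simp only [hQdef] at hfinal
  have heq : ε * Real.exp (K * t) = -(P n o t) / 2 := by
    rw [hεdef]; field_simp
  rw [heq] at hfinal
  linarith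

lemma tele (u : ℕ → ℝ) (a : ℕ) : ∀ b, a ≤ b →
    ∑ n' ∈ Finset.Icc a b, (u (n' + 1) - u n') = u (b + 1) - u a := by
  intro b
  induction b with
  | zero => intro h; interval_cases a; simp
  | succ M ih =>
    intro h
    rcases Nat.lt_or_ge M a with hM | hM
    · have : a = M + 1 := le_antisymm h hM
      subst this; simp
    · rw [Finset.sum_Icc_succ_top (by omega), ih hM]; ring

lemma tele1 (u : ℕ → ℝ) (a b : ℕ) (h : a ≤ b) :
    ∑ n' ∈ Finset.Icc a b, ((if n' + 1 ≤ b then u (n' + 1) else 0) - u n') = -u a := by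
  have h2 : ∑ n' ∈ Finset.Icc a b, ((if n' + 1 ≤ b then u (n' + 1) else 0) - u (n' + 1))
      = -u (b + 1) := by
    rw [Finset.sum_eq_single_of_mem b (Finset.mem_Icc.mpr ⟨h, le_refl b⟩)]
    · simp
    · intro n' hn' hne
      have : n' + 1 ≤ b := by simp [Finset.mem_Icc] at hn'; omega
      simp [this]
  have h3 := tele u a b h
  calc ∑ n' ∈ Finset.Icc a b, ((if n' + 1 ≤ b then u (n' + 1) else 0) - u n')
      = ∑ n' ∈ Finset.Icc a b, (((if n' + 1 ≤ b then u (n' + 1) else 0) - u (n' + 1))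
          + (u (n' + 1) - u n')) := by apply Finset.sum_congr rfl; intros; ring
    _ = -u (b + 1) + (u (b + 1) - u a) := by rw [Finset.sum_add_distrib, h2, h3]
    _ = -u a := by ring


set_option maxHeartbeats 2000000 in
/-- For the solution of the synaptic CME started from `(N0, 0)`, if the
upper tail of `P_N` is below `ε` at time `t_k`, it remains below `ε` at all later times. -/
theorem cme_margN_upper_tail_bound_persists
    (N0 C : ℕ) (κd κe : ℝ) (κa : ℝ → ℝ)
    (hN0 : 1 ≤ N0) (hC : 1 ≤ C) (hκd : 0 ≤ κd) (hκe : 0 ≤ κe)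
    (hκa_cont : Continuous κa) (hκa : ∀ t : ℝ, 0 ≤ κa t)
    (P : ℕ → ℕ → ℝ → ℝ) (hP : IsCMESolution N0 C κd κe κa P)
    (hinit1 : P N0 0 0 = 1)
    (hinit0 : ∀ n o : ℕ, ¬(n = N0 ∧ o = 0) → P n o 0 = 0)
    (tk : ℝ) (htk : 0 ≤ tk) (ε : ℝ) (hε : 0 < ε)
    (Nmax : ℕ)
    (hNmax : ∑ n' ∈ Finset.Icc Nmax N0, margN C P n' tk < ε) :
    ∀ t : ℝ, tk ≤ t → ∑ n' ∈ Finset.Icc Nmax N0, margN C P n' t < ε := by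
  classical
  intro t htt
  rcases le_or_gt Nmax N0 with hNle | hNgt
  swap
  · rw [Finset.Icc_eq_empty (by omega)]
    simpa using hε
  have hnonneg := cme_nonneg N0 C κd κe κa hκd hκe hκa_cont hκa P hP hinit1 hinit0
  have hbadzero := cme_bad_zero N0 C κd κe κa hκd hκe hκa_cont hκa P hP hinit0
  set W : ℝ → ℝ := fun s => ∑ n' ∈ Finset.Icc Nmax N0, ∑ o' ∈ Finset.range (C + 1),
    cmeRHS N0 C κd κe κa P n' o' s with hWdef
  have hGderiv : ∀ s : ℝ, 0 ≤ s →
      HasDerivAt (fun u => ∑ n' ∈ Finset.Icc Nmax N0, margN C P n' u) (W s) s := by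
    intro s hs
    apply HasDerivAt.fun_sum
    intro n' hn'
    have hn'le : n' ≤ N0 := (Finset.mem_Icc.1 hn').2
    apply HasDerivAt.fun_sum
    intro o' ho'
    exact hP n' hn'le o' (Nat.lt_succ_iff.1 (Finset.mem_range.1 ho')) s hs
  have hWeq : ∀ s : ℝ, W s
      = ∑ o' ∈ Finset.range (C + 1), -(κe * ((Nmax:ℝ) - o') * P Nmax o' s) := by
    intro s
    show (∑ n' ∈ Finset.Icc Nmax N0, ∑ o' ∈ Finset.range (C + 1),
      cmeRHS N0 C κd κe κa P n' o' s) = _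
    have hinner : ∀ n' ∈ Finset.Icc Nmax N0,
        ∑ o' ∈ Finset.range (C + 1), cmeRHS N0 C κd κe κa P n' o' s
        = ∑ o' ∈ Finset.range (C + 1),
          ((if n' + 1 ≤ N0 then κe * ((n':ℝ) + 1 - o') * P (n' + 1) o' s else 0)
            - κe * ((n':ℝ) - o') * P n' o' s) := by
      intro n' hn'
      have hsplit : ∀ o' ∈ Finset.range (C + 1), cmeRHS N0 C κd κe κa P n' o' s
          = ((if o' + 1 ≤ C then κd * ((o':ℝ) + 1) * P n' (o' + 1) s else 0)
              - κd * (o':ℝ) * P n' o' s)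
            + ((if 1 ≤ o' then κa s * ((n':ℝ) - o' + 1) * ((C:ℝ) - o' + 1) * P n' (o' - 1) s
                else 0)
              - κa s * ((n':ℝ) - o') * ((C:ℝ) - o') * P n' o' s)
            + ((if n' + 1 ≤ N0 then κe * ((n':ℝ) + 1 - o') * P (n' + 1) o' s else 0)
              - κe * ((n':ℝ) - o') * P n' o' s) := by
        intro o' _
        simp only [cmeRHS]
        ring
      rw [Finset.sum_congr rfl hsplit, Finset.sum_add_distrib, Finset.sum_add_distrib]
      have hA : ∑ o' ∈ Finset.range (C + 1),
          ((if o' + 1 ≤ C then κd * ((o':ℝ) + 1) * P n' (o' + 1) s else 0)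
            - κd * (o':ℝ) * P n' o' s) = 0 := by
        rw [Finset.sum_sub_distrib]
        have h1 : ∑ o' ∈ Finset.range (C + 1),
            (if o' + 1 ≤ C then κd * ((o':ℝ) + 1) * P n' (o' + 1) s else 0)
            = ∑ o' ∈ Finset.range C, κd * ((o':ℝ) + 1) * P n' (o' + 1) s := by
          rw [Finset.sum_range_succ]
          simp only [add_le_iff_nonpos_right, Nat.le_zero, one_ne_zero, if_false, add_zero]
          apply Finset.sum_congr rfl
          intro o' ho'
          have hcc : o' + 1 ≤ C := Finset.mem_range.1 ho'
          split_ifs with hif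
          · rfl
        have h2 : ∑ o' ∈ Finset.range (C + 1), κd * (o':ℝ) * P n' o' s
            = ∑ o' ∈ Finset.range C, κd * (((o':ℕ) + 1 : ℕ):ℝ) * P n' (o' + 1) s + κd * ((0:ℕ):ℝ) * P n' 0 s :=
          Finset.sum_range_succ' (fun o' => κd * (o':ℝ) * P n' o' s) C
        rw [h1, h2]
        push_cast
        simp
      have hB : ∑ o' ∈ Finset.range (C + 1),
          ((if 1 ≤ o' then κa s * ((n':ℝ) - o' + 1) * ((C:ℝ) - o' + 1) * P n' (o' - 1) s
              else 0)
            - κa s * ((n':ℝ) - o') * ((C:ℝ) - o') * P n' o' s) = 0 := by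
        rw [Finset.sum_sub_distrib]
        have h1 : ∑ o' ∈ Finset.range (C + 1),
            (if 1 ≤ o' then κa s * ((n':ℝ) - o' + 1) * ((C:ℝ) - o' + 1) * P n' (o' - 1) s
              else 0)
            = ∑ o' ∈ Finset.range C, κa s * ((n':ℝ) - o') * ((C:ℝ) - o') * P n' o' s := by
          rw [Finset.sum_range_succ' (fun o' =>
            if 1 ≤ o' then κa s * ((n':ℝ) - o' + 1) * ((C:ℝ) - o' + 1) * P n' (o' - 1) s
              else 0) C]
          norm_num
          apply Finset.sum_congr rfl
          intro o' _
          push_cast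
          ring
        have h2 : ∑ o' ∈ Finset.range (C + 1),
            κa s * ((n':ℝ) - o') * ((C:ℝ) - o') * P n' o' s
            = ∑ o' ∈ Finset.range C, κa s * ((n':ℝ) - o') * ((C:ℝ) - o') * P n' o' s
              + κa s * ((n':ℝ) - C) * ((C:ℝ) - C) * P n' C s :=
          Finset.sum_range_succ _ C
        rw [h1, h2]
        ring
      rw [hA, hB]
      ring
    rw [Finset.sum_congr rfl hinner, Finset.sum_comm]
    apply Finset.sum_congr rfl
    intro o' _
    have := tele1 (fun m => κe * ((m:ℝ) - o') * P m o' s) Nmax N0 hNle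
    rw [← this]
    apply Finset.sum_congr rfl
    intro n' _
    by_cases h : n' + 1 ≤ N0
    · simp only [if_pos h]
      push_cast
      ring_nf
    · simp only [if_neg h]
  have hWle : ∀ s : ℝ, 0 ≤ s → W s ≤ 0 := by
    intro s hs
    rw [hWeq s]
    apply Finset.sum_nonpos
    intro o' ho'
    have ho'C : o' ≤ C := Nat.lt_succ_iff.1 (Finset.mem_range.1 ho')
    rcases le_or_gt o' Nmax with h | h
    · have hpos : 0 ≤ κe * ((Nmax:ℝ) - o') * P Nmax o' s :=
        mul_nonneg (mul_nonneg hκe (by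
          have : (o':ℝ) ≤ Nmax := Nat.cast_le.mpr h
          linarith)) (hnonneg s hs Nmax hNle o' ho'C)
      linarith
    · rw [hbadzero s hs Nmax hNle o' ho'C h]
      simp
  have hmono : AntitoneOn (fun u => ∑ n' ∈ Finset.Icc Nmax N0, margN C P n' u)
      (Set.Icc tk t) := by
    apply antitoneOn_of_deriv_nonpos (convex_Icc tk t)
    · intro s hs
      exact (hGderiv s (le_trans htk hs.1)).continuousAt.continuousWithinAt
    · rw [interior_Icc]; intro s hs
      exact (hGderiv s (le_trans htk hs.1.le)).differentiableAt.differentiableWithinAt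
    · rw [interior_Icc]; intro s hs
      rw [(hGderiv s (le_trans htk hs.1.le)).deriv]
      exact hWle s (le_trans htk hs.1.le)
  have hle := hmono (Set.mem_Icc.mpr ⟨le_refl tk, htt⟩) (Set.mem_Icc.mpr ⟨htt, le_refl t⟩) htt
  simp only at hle
  exact lt_of_le_of_lt hle hNmax
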